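/- Let G be a finite simple graph with maximal vertex degree Δ, and let u be a complex number with |u|·(Δ − 1) < 1 and |u| < 1. For n ≥ 0 let M̃ₙ(x,y) be the number of non-backtracking walks of length n from x to y. Then for all vertices x, y the series K(x,y) = Σ_{n ≥ 0} uⁿ·M̃ₙ(x,y) converges absolutely, and the resulting matrix K satisfies (I − u·A + u²·(D − I))·K = (1 − u²)·I, where A is the adjacency matrix and D the diagonal degree matrix. -/

import Mathlib

open Matrix

variable {V : Type*}

/-- The number of non-backtracking walks of length `n` from `x` to `y`. -/
noncomputable def nbWalkCount (G : SimpleGraph V) (n : ℕ) (x y : V) : ℕ :=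
  Nat.card {w : Fin (n + 1) → V //
    w 0 = x ∧ w (Fin.last n) = y ∧
    (∀ (i : ℕ) (h : i + 1 ≤ n), G.Adj (w ⟨i, by omega⟩) (w ⟨i + 1, by omega⟩)) ∧
    (∀ (i : ℕ) (h : i + 2 ≤ n), w ⟨i + 2, by omega⟩ ≠ w ⟨i, by omega⟩)}

section NBauxSection

namespace NBaux

open Classical in
lemma nat_card_sigma {ι : Type*} [Fintype ι] (F : ι → Type*) [∀ i, Finite (F i)] :
    Nat.card (Σ i, F i) = ∑ i, Nat.card (F i) := by
  letI : ∀ i, Fintype (F i) := fun i => Fintype.ofFinite (F i)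
  simp [Nat.card_eq_fintype_card]

lemma nat_card_fibers {α V : Type*} [Finite α] [Fintype V] (f : α → V) :
    Nat.card α = ∑ z : V, Nat.card {a // f a = z} := by
  rw [← Nat.card_congr (Equiv.sigmaFiberEquiv f), nat_card_sigma]

variable {V : Type*} (G : SimpleGraph V)

def W (n : ℕ) (x y : V) : Type _ :=
  {w : Fin (n + 1) → V //
    w 0 = x ∧ w (Fin.last n) = y ∧
    (∀ (i : ℕ) (h : i + 1 ≤ n), G.Adj (w ⟨i, by omega⟩) (w ⟨i + 1, by omega⟩)) ∧
    (∀ (i : ℕ) (h : i + 2 ≤ n), w ⟨i + 2, by omega⟩ ≠ w ⟨i, by omega⟩)}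

instance instFinW [Finite V] (n : ℕ) (x y : V) : Finite (W G n x y) := by
  unfold W; exact Subtype.finite

noncomputable def m (n : ℕ) (x y : V) : ℕ := Nat.card (W G n x y)

def Wh (n : ℕ) (z y x : V) : Type _ :=
  {w : W G n z y // ∀ (h : 1 ≤ n), w.1 ⟨1, by omega⟩ ≠ x}

instance instFinWh [Finite V] (n : ℕ) (z y x : V) : Finite (Wh G n z y x) := by
  unfold Wh; exact Subtype.finite

noncomputable def g (n : ℕ) (z y x : V) : ℕ := Nat.card (Wh G n z y x)

variable {G}

lemma m_zero [Finite V] [DecidableEq V] (x y : V) : m G 0 x y = if x = y then 1 else 0 := by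
  split_ifs with h
  · subst h
    have hne : Nonempty (W G 0 x x) := ⟨⟨fun _ => x, rfl, rfl, by omega, by omega⟩⟩
    have hs : Subsingleton (W G 0 x x) := ⟨by
      rintro ⟨w, hw, -⟩ ⟨v, hv, -⟩
      apply Subtype.ext; funext i
      have : i = 0 := Fin.ext (by omega)
      show w i = v i
      rw [this, hw, hv]⟩
    exact Nat.card_eq_one_iff_unique.2 ⟨hs, hne⟩
  · have : IsEmpty (W G 0 x y) := ⟨by
      rintro ⟨w, hw, hw', -⟩
      exact h (hw ▸ hw' ▸ rfl)⟩
    simp [m, Nat.card_of_isEmpty]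

def ext (x : V) {n : ℕ} (v : Fin (n+1) → V) : Fin (n+2) → V :=
  fun j => if h : j.1 = 0 then x else v ⟨j.1 - 1, by omega⟩

def dropEquiv (n : ℕ) {x y z : V} (hxz : G.Adj x z) :
    {w : W G (n+1) x y // w.1 ⟨1, by omega⟩ = z} ≃ Wh G n z y x where
  toFun p :=
    ⟨⟨fun i => p.1.1 ⟨i.1 + 1, by omega⟩,
      p.2,
      p.1.2.2.1,
      fun i h => p.1.2.2.2.1 (i+1) (by omega),
      fun i h => p.1.2.2.2.2 (i+1) (by omega)⟩,
     fun h => by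
       have h2 := p.1.2.2.2.2 0 (by omega)
       have h0 : p.1.1 ⟨0, by omega⟩ = x := p.1.2.1
       exact fun e => h2 (e.trans h0.symm)⟩
  invFun q :=
    ⟨⟨ext x q.1.1, rfl,
      q.1.2.2.1,
      by
        rintro (_ | i) h
        · have h0 : q.1.1 ⟨0, by omega⟩ = z := q.1.2.1
          show G.Adj x (q.1.1 ⟨0, by omega⟩)
          rw [h0]; exact hxz
        · exact q.1.2.2.2.1 i (by omega),
      by
        rintro (_ | i) h
        · show q.1.1 ⟨1, by omega⟩ ≠ x
          exact q.2 (by omega)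
        · exact q.1.2.2.2.2 i (by omega)⟩,
     q.1.2.1⟩
  left_inv p := by
    apply Subtype.ext; apply Subtype.ext; funext j
    rcases j with ⟨(_ | j), hj⟩
    · exact p.1.2.1.symm
    · rfl
  right_inv q := by
    apply Subtype.ext; apply Subtype.ext; funext i
    rfl

lemma not_adj_isEmpty (n : ℕ) {x y z : V} (hxz : ¬ G.Adj x z) :
    IsEmpty {w : W G (n+1) x y // w.1 ⟨1, by omega⟩ = z} := by
  constructor
  rintro ⟨w, hw⟩
  apply hxz
  have h0 : w.1 ⟨0, by omega⟩ = x := w.2.1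
  have := w.2.2.2.1 0 (by omega)
  rw [h0, hw] at this
  exact this

lemma g_zero (z y x : V) : g G 0 z y x = m G 0 z y :=
  Nat.card_congr (Equiv.subtypeUnivEquiv (fun _ h => absurd h (by omega)))

section Counting

variable [Fintype V] [DecidableEq V] [DecidableRel G.Adj]

lemma A_raw (n : ℕ) (x y : V) :
    m G (n+1) x y
      = ∑ z ∈ G.neighborFinset x, Nat.card {w : W G (n+1) x y // w.1 ⟨1, by omega⟩ = z} := by
  rw [m, nat_card_fibers (fun w : W G (n+1) x y => w.1 ⟨1, by omega⟩)]
  refine (Finset.sum_subset (Finset.subset_univ _) ?_).symm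
  intro z _ hz
  rw [SimpleGraph.mem_neighborFinset] at hz
  haveI := not_adj_isEmpty (G := G) n (x := x) (y := y) (z := z) hz
  exact Nat.card_of_isEmpty

lemma lemA (n : ℕ) (x y : V) :
    m G (n+1) x y = ∑ z ∈ G.neighborFinset x, g G n z y x := by
  rw [A_raw]
  refine Finset.sum_congr rfl (fun z hz => ?_)
  rw [SimpleGraph.mem_neighborFinset] at hz
  exact Nat.card_congr (dropEquiv n hz)

lemma lemC (n : ℕ) (z y x : V) :
    m G (n+1) z y
      = g G (n+1) z y x + Nat.card {w : W G (n+1) z y // w.1 ⟨1, by omega⟩ = x} := by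
  classical
  have e := Equiv.sumCompl (fun w : W G (n+1) z y => w.1 ⟨1, by omega⟩ = x)
  have h1 : m G (n+1) z y
      = Nat.card {w : W G (n+1) z y // w.1 ⟨1, by omega⟩ = x}
        + Nat.card {w : W G (n+1) z y // ¬ w.1 ⟨1, by omega⟩ = x} := by
    rw [m, ← Nat.card_congr e, Nat.card_sum]
  have h2 : Nat.card {w : W G (n+1) z y // ¬ w.1 ⟨1, by omega⟩ = x} = g G (n+1) z y x :=
    Nat.card_congr (Equiv.subtypeEquivRight (fun w => ⟨fun H h => H, fun H => H (by omega)⟩))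
  omega

lemma R0 (x y : V) : ∑ z ∈ G.neighborFinset x, m G 0 z y = m G 1 x y := by
  rw [lemA 0]
  exact Finset.sum_congr rfl (fun z _ => (g_zero z y x).symm)

lemma R1 (x y : V) :
    ∑ z ∈ G.neighborFinset x, m G 1 z y = m G 2 x y + G.degree x * m G 0 x y := by
  have step : ∀ z ∈ G.neighborFinset x, m G 1 z y = g G 1 z y x + m G 0 x y := by
    intro z hz
    rw [SimpleGraph.mem_neighborFinset] at hz
    have := lemC (G := G) 0 z y x
    rw [Nat.card_congr (dropEquiv 0 hz.symm)] at this
    have h2 : Nat.card (Wh G 0 x y z) = m G 0 x y := g_zero x y z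
    rw [h2] at this
    exact this
  rw [Finset.sum_congr rfl step, Finset.sum_add_distrib, ← lemA 1, Finset.sum_const,
    smul_eq_mul, G.card_neighborFinset_eq_degree]

lemma R2 (n : ℕ) (x y : V) :
    (∑ z ∈ G.neighborFinset x, m G (n+2) z y) + m G (n+1) x y
      = m G (n+3) x y + G.degree x * m G (n+1) x y := by
  have step : ∀ z ∈ G.neighborFinset x,
      m G (n+2) z y = g G (n+2) z y x + g G (n+1) x y z := by
    intro z hz
    rw [SimpleGraph.mem_neighborFinset] at hz
    have := lemC (G := G) (n+1) z y x
    rwa [Nat.card_congr (dropEquiv (n+1) hz.symm)] at this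
  have eq1 : ∑ z ∈ G.neighborFinset x, m G (n+2) z y
      = m G (n+3) x y + ∑ z ∈ G.neighborFinset x, g G (n+1) x y z := by
    rw [Finset.sum_congr rfl step, Finset.sum_add_distrib, ← lemA (n+2)]
  have eq2 : (∑ z ∈ G.neighborFinset x, g G (n+1) x y z) + m G (n+1) x y
      = G.degree x * m G (n+1) x y := by
    have hsum : ∀ z ∈ G.neighborFinset x,
        g G (n+1) x y z + Nat.card {w : W G (n+1) x y // w.1 ⟨1, by omega⟩ = z}
          = m G (n+1) x y := fun z _ => (lemC n x y z).symm
    have := Finset.sum_congr rfl hsum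
    rw [Finset.sum_add_distrib, ← A_raw n, Finset.sum_const,
      smul_eq_mul, G.card_neighborFinset_eq_degree] at this
    exact this
  omega

end Counting

section Bound

variable [Fintype V] [DecidableEq V] [DecidableRel G.Adj]

def fiberWh_equiv {n : ℕ} {z y x c : V} (hcx : c ≠ x) :
    {w : Wh G (n+1) z y x // w.1.1 ⟨1, by omega⟩ = c}
      ≃ {w : W G (n+1) z y // w.1 ⟨1, by omega⟩ = c} where
  toFun p := ⟨p.1.1, p.2⟩
  invFun q := ⟨⟨q.1, fun _ e => hcx (q.2 ▸ e ▸ rfl)⟩, q.2⟩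
  left_inv p := by apply Subtype.ext; apply Subtype.ext; rfl
  right_inv q := by apply Subtype.ext; rfl

lemma fiber_x_empty {n : ℕ} {z y x : V} :
    IsEmpty {w : Wh G (n+1) z y x // w.1.1 ⟨1, by omega⟩ = x} := by
  constructor
  rintro ⟨w, hw⟩
  exact w.2 (by omega) hw

lemma g_le : ∀ n : ℕ, ∀ z y x : V, G.Adj z x →
    g G n z y x ≤ (G.maxDegree - 1) ^ n := by
  intro n
  induction n with
  | zero =>
    intro z y x _
    have h1 : g G 0 z y x = m G 0 z y := g_zero z y x
    rw [h1, m_zero]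
    split_ifs <;> simp
  | succ n IH =>
    intro z y x hzx
    have hdecomp : g G (n+1) z y x
        = ∑ c : V, Nat.card {w : Wh G (n+1) z y x // w.1.1 ⟨1, by omega⟩ = c} :=
      nat_card_fibers _
    have hrestrict : g G (n+1) z y x
        = ∑ c ∈ (G.neighborFinset z).erase x,
            Nat.card {w : Wh G (n+1) z y x // w.1.1 ⟨1, by omega⟩ = c} := by
      rw [hdecomp]
      refine (Finset.sum_subset (Finset.subset_univ _) ?_).symm
      intro c _ hc
      rcases eq_or_ne c x with rfl | hcx
      · haveI := fiber_x_empty (G := G) (n := n) (z := z) (y := y) (x := c)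
        exact Nat.card_of_isEmpty
      · have hna : ¬ G.Adj z c := by
          intro hadj
          refine hc (Finset.mem_erase.2 ⟨hcx, ?_⟩)
          rw [SimpleGraph.mem_neighborFinset]
          exact hadj
        haveI : IsEmpty {w : Wh G (n+1) z y x // w.1.1 ⟨1, by omega⟩ = c} :=
          ⟨fun p => (not_adj_isEmpty (G := G) n hna).false ⟨p.1.1, p.2⟩⟩
        exact Nat.card_of_isEmpty
    have hterm : ∀ c ∈ (G.neighborFinset z).erase x,
        Nat.card {w : Wh G (n+1) z y x // w.1.1 ⟨1, by omega⟩ = c}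
          ≤ (G.maxDegree - 1) ^ n := by
      intro c hc
      rcases Finset.mem_erase.1 hc with ⟨hcx, hcz⟩
      rw [SimpleGraph.mem_neighborFinset] at hcz
      calc Nat.card {w : Wh G (n+1) z y x // w.1.1 ⟨1, by omega⟩ = c}
          = g G n c y z := by
            rw [Nat.card_congr (fiberWh_equiv (G := G) hcx),
              Nat.card_congr (dropEquiv (G := G) (y := y) n hcz)]
            rfl
        _ ≤ (G.maxDegree - 1) ^ n := IH c y z hcz.symm
    calc g G (n+1) z y x
        ≤ ∑ _c ∈ (G.neighborFinset z).erase x, (G.maxDegree - 1) ^ n := by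
          rw [hrestrict]; exact Finset.sum_le_sum hterm
      _ = ((G.neighborFinset z).erase x).card * (G.maxDegree - 1) ^ n := by
          rw [Finset.sum_const, smul_eq_mul]
      _ ≤ (G.maxDegree - 1) * (G.maxDegree - 1) ^ n := by
          apply Nat.mul_le_mul_right
          have hmem : x ∈ G.neighborFinset z := by
            rw [SimpleGraph.mem_neighborFinset]; exact hzx
          rw [Finset.card_erase_of_mem hmem, G.card_neighborFinset_eq_degree]
          exact Nat.sub_le_sub_right (G.degree_le_maxDegree z) 1
      _ = (G.maxDegree - 1) ^ (n+1) := (pow_succ' _ _).symm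

lemma m_le (n : ℕ) (x y : V) :
    m G (n+1) x y ≤ G.maxDegree * (G.maxDegree - 1) ^ n := by
  rw [lemA n x y]
  calc ∑ z ∈ G.neighborFinset x, g G n z y x
      ≤ ∑ _z ∈ G.neighborFinset x, (G.maxDegree - 1) ^ n := by
        refine Finset.sum_le_sum (fun z hz => ?_)
        rw [SimpleGraph.mem_neighborFinset] at hz
        exact g_le n z y x hz.symm
    _ = (G.neighborFinset x).card * (G.maxDegree - 1) ^ n := by
        rw [Finset.sum_const, smul_eq_mul]
    _ ≤ G.maxDegree * (G.maxDegree - 1) ^ n := by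
        apply Nat.mul_le_mul_right
        rw [G.card_neighborFinset_eq_degree]
        exact G.degree_le_maxDegree x

end Bound

end NBaux

open NBaux in
theorem kernel_inverts_deformed_laplacian' {V : Type*} (G : SimpleGraph V) [Fintype V] [DecidableEq V]
    [DecidableRel G.Adj] (u : ℂ) (hu : ‖u‖ < 1)
    (hu' : ‖u‖ * ((G.maxDegree : ℝ) - 1) < 1) :
    (∀ x y : V, Summable (fun n : ℕ => ‖u ^ n * (NBaux.m G n x y : ℂ)‖)) ∧
    (1 - u • G.adjMatrix ℂ
        + (u ^ 2) • (Matrix.diagonal (fun x => (G.degree x : ℂ)) - 1)) *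
      (Matrix.of fun x y => ∑' n : ℕ, u ^ n * (NBaux.m G n x y : ℂ)) =
      (1 - u ^ 2) • (1 : Matrix V V ℂ) := by
  classical
  have habs : (0:ℝ) ≤ ‖u‖ := norm_nonneg u
  set Δ : ℕ := G.maxDegree with hDl
  set r : ℝ := ‖u‖ * ((Δ - 1 : ℕ) : ℝ) with hr
  have hr0 : (0:ℝ) ≤ r := by positivity
  have hr1 : r < 1 := by
    rcases Nat.eq_zero_or_pos Δ with h | h
    · rw [hr, h]; simpa using zero_lt_one
    · have hc : ((Δ - 1 : ℕ) : ℝ) = (Δ : ℝ) - 1 := by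
        rw [Nat.cast_sub h, Nat.cast_one]
      rw [hr, hc]; exact hu'
  have key : ∀ x y : V, Summable (fun n : ℕ => ‖u ^ n * (NBaux.m G n x y : ℂ)‖) := by
    intro x y
    rw [← summable_nat_add_iff 1]
    have hmaj : Summable (fun n : ℕ => (‖u‖ * Δ) * r ^ n) :=
      (summable_geometric_of_lt_one hr0 hr1).mul_left _
    refine Summable.of_nonneg_of_le (fun n => norm_nonneg _) (fun n => ?_) hmaj
    have hb : (NBaux.m G (n+1) x y : ℝ) ≤ (Δ : ℝ) * ((Δ - 1 : ℕ) : ℝ) ^ n := by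
      exact_mod_cast m_le (G := G) n x y
    calc ‖u ^ (n+1) * (NBaux.m G (n+1) x y : ℂ)‖
        = ‖u‖ ^ (n+1) * (NBaux.m G (n+1) x y : ℝ) := by
          rw [norm_mul, norm_pow]
          norm_num
      _ ≤ ‖u‖ ^ (n+1) * ((Δ : ℝ) * ((Δ - 1 : ℕ) : ℝ) ^ n) := by
          apply mul_le_mul_of_nonneg_left hb (by positivity)
      _ = (‖u‖ * Δ) * r ^ n := by rw [hr]; ring
  refine ⟨key, ?_⟩
  have hsum : ∀ x y : V, Summable (fun n : ℕ => u ^ n * (NBaux.m G n x y : ℂ)) :=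
    fun x y => (key x y).of_norm
  set D : Matrix V V ℂ := Matrix.diagonal (fun x => (G.degree x : ℂ)) with hD
  set K : Matrix V V ℂ := Matrix.of fun x y => ∑' n : ℕ, u ^ n * (NBaux.m G n x y : ℂ) with hK
  have expand : (1 - u • G.adjMatrix ℂ + (u ^ 2) • (D - 1)) * K
      = K - u • (G.adjMatrix ℂ * K) + (u ^ 2) • ((D - 1) * K) := by
    rw [Matrix.add_mul, Matrix.sub_mul, Matrix.one_mul, Matrix.smul_mul, Matrix.smul_mul]
  rw [expand]
  ext x y
  have hAK : (G.adjMatrix ℂ * K) x y = ∑ z ∈ G.neighborFinset x, K z y :=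
    SimpleGraph.adjMatrix_mul_apply _ _ _ _
  have hDK : ((D - 1) * K) x y = (G.degree x : ℂ) * K x y - K x y := by
    rw [Matrix.sub_mul, Matrix.one_mul, Matrix.sub_apply, hD, Matrix.diagonal_mul]
  simp only [Matrix.add_apply, Matrix.sub_apply, Matrix.smul_apply, smul_eq_mul,
    Matrix.one_apply, hAK, hDK]
  -- series setup
  set f : ℕ → ℂ := fun n => u ^ n * (NBaux.m G n x y : ℂ) with hf_def
  have hf : Summable f := hsum x y
  have hf1 : Summable (fun n => f (n+1)) := (summable_nat_add_iff 1).2 hf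
  have hf2 : Summable (fun n => f (n+2)) := (summable_nat_add_iff 2).2 hf
  have hf3 : Summable (fun n => f (n+3)) := (summable_nat_add_iff 3).2 hf
  have hKxy : K x y = ∑' n, f n := by
    simp only [hK, Matrix.of_apply, hf_def]
  set T : ℂ := ∑' n, f n with hT
  have htail1 : ∑' n, f (n+1) = T - f 0 := by
    rw [hT, Summable.tsum_eq_zero_add hf]; ring
  have htail2 : ∑' n, f (n+2) = T - f 0 - f 1 := by
    have h := Summable.tsum_eq_zero_add hf1
    have h2 : (fun n => f (n+1+1)) = fun n => f (n+2) := rfl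
    rw [h2] at h
    norm_num at h
    linear_combination htail1 - h
  have htail3 : ∑' n, f (n+3) = T - f 0 - f 1 - f 2 := by
    have h := Summable.tsum_eq_zero_add hf2
    have h2 : (fun n => f (n+2+1)) = fun n => f (n+3) := rfl
    rw [h2] at h
    norm_num at h
    linear_combination htail2 - h
  set s : ℕ → ℕ := fun n => ∑ z ∈ G.neighborFinset x, NBaux.m G n z y with hs_def
  have hswap : ∑ z ∈ G.neighborFinset x, K z y = ∑' n, u ^ n * (s n : ℂ) := by
    have h1 : ∑ z ∈ G.neighborFinset x, K z y
        = ∑ z ∈ G.neighborFinset x, ∑' n, u ^ n * (NBaux.m G n z y : ℂ) := by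
      simp only [hK, Matrix.of_apply]
    rw [h1, ← Summable.tsum_finsetSum (fun z _ => hsum z y)]
    refine tsum_congr (fun n => ?_)
    simp only [hs_def]
    push_cast
    rw [Finset.mul_sum]
  have hs : Summable (fun n => u ^ n * (s n : ℂ)) := by
    have h1 : (fun n => u ^ n * (s n : ℂ))
        = fun n => ∑ z ∈ G.neighborFinset x, u ^ n * (NBaux.m G n z y : ℂ) := by
      funext n
      simp only [hs_def]
      push_cast
      rw [Finset.mul_sum]
    rw [h1]
    exact summable_sum (fun z _ => hsum z y)
  set t : ℕ → ℂ := fun n => u ^ (n+1) * (s n : ℂ) with ht_def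
  have ht : Summable t := by
    have h1 : t = fun n => u * (u ^ n * (s n : ℂ)) := by
      funext n; simp only [ht_def]; ring
    rw [h1]
    exact hs.mul_left u
  have ht1 : Summable (fun n => t (n+1)) := (summable_nat_add_iff 1).2 ht
  have huS : u * (∑' n, u ^ n * (s n : ℂ)) = ∑' n, t n := by
    rw [← tsum_mul_left]
    exact tsum_congr (fun n => by simp only [ht_def]; ring)
  have hdc : ∀ n : ℕ, t (n+2) = f (n+3) + (((G.degree x : ℂ) - 1) * u ^ 2) * f (n+1) := by
    intro n
    have hR2 : ((s (n+2) : ℂ)) + (NBaux.m G (n+1) x y : ℂ)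
        = (NBaux.m G (n+3) x y : ℂ) + (G.degree x : ℂ) * (NBaux.m G (n+1) x y : ℂ) := by
      simp only [hs_def]
      exact_mod_cast R2 (G := G) n x y
    have hsval : (s (n+2) : ℂ)
        = (NBaux.m G (n+3) x y : ℂ) + ((G.degree x : ℂ) - 1) * (NBaux.m G (n+1) x y : ℂ) := by
      linear_combination hR2
    simp only [ht_def, hf_def]
    rw [hsval]
    ring
  have htsum2 : ∑' n, t (n+2)
      = (T - f 0 - f 1 - f 2) + (((G.degree x : ℂ) - 1) * u ^ 2) * (T - f 0) := by
    calc ∑' n, t (n+2)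
        = ∑' n, (f (n+3) + (((G.degree x : ℂ) - 1) * u ^ 2) * f (n+1)) :=
          tsum_congr (fun n => hdc n)
      _ = (∑' n, f (n+3)) + (((G.degree x : ℂ) - 1) * u ^ 2) * (∑' n, f (n+1)) := by
          rw [Summable.tsum_add hf3 (hf1.mul_left _), tsum_mul_left]
      _ = (T - f 0 - f 1 - f 2) + (((G.degree x : ℂ) - 1) * u ^ 2) * (T - f 0) := by
          rw [htail3, htail1]
  have hT2 : ∑' n, t n = t 0 + t 1 + ∑' n, t (n+2) := by
    rw [Summable.tsum_eq_zero_add ht]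
    have h := Summable.tsum_eq_zero_add ht1
    have h2 : (fun n => t (n+1+1)) = fun n => t (n+2) := rfl
    rw [h2] at h
    rw [h]; ring
  have hs0 : (s 0 : ℂ) = (NBaux.m G 1 x y : ℂ) := by
    simp only [hs_def]
    exact_mod_cast R0 (G := G) x y
  have hs1 : (s 1 : ℂ) = (NBaux.m G 2 x y : ℂ) + (G.degree x : ℂ) * (NBaux.m G 0 x y : ℂ) := by
    simp only [hs_def]
    exact_mod_cast R1 (G := G) x y
  have htv0 : t 0 = u * (NBaux.m G 1 x y : ℂ) := by
    simp only [ht_def]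
    rw [hs0]; norm_num
  have htv1 : t 1 = u ^ 2 * ((NBaux.m G 2 x y : ℂ) + (G.degree x : ℂ) * (NBaux.m G 0 x y : ℂ)) := by
    simp only [ht_def]
    rw [hs1]
  have hm0 : (NBaux.m G 0 x y : ℂ) = if x = y then 1 else 0 := by
    rw [m_zero x y]
    split_ifs <;> simp
  have hfv0 : f 0 = (NBaux.m G 0 x y : ℂ) := by simp only [hf_def, pow_zero, one_mul]
  have hfv1 : f 1 = u * (NBaux.m G 1 x y : ℂ) := by simp only [hf_def, pow_one]
  have hfv2 : f 2 = u ^ 2 * (NBaux.m G 2 x y : ℂ) := by simp only [hf_def]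
  have hfinal : u * (∑' n, u ^ n * (s n : ℂ))
      = u * (NBaux.m G 1 x y : ℂ)
        + u ^ 2 * ((NBaux.m G 2 x y : ℂ) + (G.degree x : ℂ) * (NBaux.m G 0 x y : ℂ))
        + ((T - f 0 - f 1 - f 2) + (((G.degree x : ℂ) - 1) * u ^ 2) * (T - f 0)) := by
    rw [huS, hT2, htsum2, htv0, htv1]
  rw [hswap, hKxy, ← hm0]
  rw [hfv0, hfv1, hfv2] at hfinal
  linear_combination -hfinal

end NBauxSection

/-- For `|u| < 1` and `|u|·(Δ − 1) < 1`, the path-generating kernel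
`K(x,y) = Σ_{n ≥ 0} uⁿ·M̃ₙ(x,y)` converges absolutely and satisfies
`(I − u·A + u²·(D − I))·K = (1 − u²)·I`. -/
theorem kernel_inverts_deformed_laplacian (G : SimpleGraph V) [Fintype V] [DecidableEq V]
    [DecidableRel G.Adj] (u : ℂ) (hu : ‖u‖ < 1)
    (hu' : ‖u‖ * ((G.maxDegree : ℝ) - 1) < 1) :
    (∀ x y : V, Summable (fun n : ℕ => ‖u ^ n * (nbWalkCount G n x y : ℂ)‖)) ∧
    (1 - u • G.adjMatrix ℂ
        + (u ^ 2) • (Matrix.diagonal (fun x => (G.degree x : ℂ)) - 1)) *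
      (Matrix.of fun x y => ∑' n : ℕ, u ^ n * (nbWalkCount G n x y : ℂ)) =
      (1 - u ^ 2) • (1 : Matrix V V ℂ) := by
  exact kernel_inverts_deformed_laplacian' G u hu hu'
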